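/- Annotation of an SLT grammar by a deterministic bottom-up tree automaton: given a deterministic bottom-up tree automaton B with state set Q over binary trees and a k-SLT grammar G (an SLT grammar whose nonterminals have rank at most k), there exists an SLT grammar of size O(|Q|^{k+1}·|G|) whose value is the tree val(G) in which every node is additionally annotated with the state that B reaches at that node in its unique run on val(G). -/

import Mathlib

/-- Trees over terminal labels `L`, nonterminals `N`, the leaf symbol `_`
(constructor `leaf`) and parameters `y_i` (constructor `param i`, 1-indexed).
Terminal-labeled nodes have exactly two children; a nonterminal node has a
list of children (its length being constrained by `ArityOk`). -/
inductive PTree (L N : Type) where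
  | leaf : PTree L N
  | param : ℕ → PTree L N
  | term : L → PTree L N → PTree L N → PTree L N
  | nt : N → List (PTree L N) → PTree L N

namespace PTree

variable {L N : Type}

/-- The pre-order list of parameter indices occurring in a tree. -/
def paramList : PTree L N → List ℕ
  | .leaf => []
  | .param i => [i]
  | .term _ l r => paramList l ++ paramList r
  | .nt _ ts => (ts.attach.map (fun t => paramList t.1)).flatten
decreasing_by
  all_goals simp_wf
  all_goals try omega
  all_goals (have := List.sizeOf_lt_of_mem t.2; omega)

/-- The number of nodes of a tree. -/
def nodeCount : PTree L N → ℕ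
  | .leaf => 1
  | .param _ => 1
  | .term _ l r => 1 + nodeCount l + nodeCount r
  | .nt _ ts => 1 + (ts.attach.map (fun t => nodeCount t.1)).sum
decreasing_by
  all_goals simp_wf
  all_goals try omega
  all_goals (have := List.sizeOf_lt_of_mem t.2; omega)

/-- Arities are respected: every nonterminal node labeled `A` has exactly
`rank A` children. -/
inductive ArityOk (rank : N → ℕ) : PTree L N → Prop
  | leaf : ArityOk rank .leaf
  | param (i : ℕ) : ArityOk rank (.param i)
  | term (a : L) {l r : PTree L N} :
      ArityOk rank l → ArityOk rank r → ArityOk rank (.term a l r)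
  | nt (A : N) {ts : List (PTree L N)} :
      ts.length = rank A → (∀ t ∈ ts, ArityOk rank t) → ArityOk rank (.nt A ts)

/-- `Occurs B t` holds iff the nonterminal `B` occurs somewhere in `t`. -/
inductive Occurs (B : N) : PTree L N → Prop
  | here (ts : List (PTree L N)) : Occurs B (.nt B ts)
  | nt (A : N) {ts : List (PTree L N)} {t : PTree L N} :
      t ∈ ts → Occurs B t → Occurs B (.nt A ts)
  | term_left (a : L) {l r : PTree L N} : Occurs B l → Occurs B (.term a l r)
  | term_right (a : L) {l r : PTree L N} : Occurs B r → Occurs B (.term a l r)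

/-- Ground trees: binary trees built from terminal symbols and `_`-leaves only
(no nonterminals, no parameters). -/
inductive Ground : PTree L N → Prop
  | leaf : Ground .leaf
  | term (a : L) {l r : PTree L N} : Ground l → Ground r → Ground (.term a l r)

/-- Substitution of the parameters `y_1, …, y_k` by the trees of `env`
(`y_i` is replaced by the `i`-th entry of `env`). -/
def subst (env : List (PTree L N)) : PTree L N → PTree L N
  | .leaf => .leaf
  | .param i => env.getD (i - 1) .leaf
  | .term a l r => .term a (subst env l) (subst env r)
  | .nt B ts => .nt B (ts.attach.map (fun t => subst env t.1))
decreasing_by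
  all_goals simp_wf
  all_goals try omega
  all_goals (have := List.sizeOf_lt_of_mem t.2; omega)

end PTree

open PTree in
/-- A straight-line (linear) tree grammar `G = (N, S, P)`:
each nonterminal `A` of rank `k` has exactly one production `A → P A`, in whose
right-hand side the parameters `y_1, …, y_k` occur exactly once each and
in this order in pre-order, all arities are respected, and the hierarchical
order `H_G = {(A, B) | B occurs in P A}` is acyclic. -/
structure SLT (L N : Type) where
  rank : N → ℕ
  start : N
  P : N → PTree L N
  rank_start : rank start = 0
  arity : ∀ A, ArityOk rank (P A)
  params : ∀ A, paramList (P A) = List.range' 1 (rank A)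
  acyclic : ∀ A, ¬ Relation.TransGen (fun X Y => Occurs Y (P X)) A A

namespace SLT

variable {L N : Type}

/-- One derivation step: replace one occurrence of a subtree `A(t_1, …, t_k)`
(`A` a nonterminal) by `P A` with each parameter `y_i` replaced by `t_i`. -/
inductive Rw (G : SLT L N) : PTree L N → PTree L N → Prop
  | head (A : N) (ts : List (PTree L N)) :
      Rw G (.nt A ts) (PTree.subst ts (G.P A))
  | term_left {l l' : PTree L N} (a : L) (r : PTree L N) :
      Rw G l l' → Rw G (.term a l r) (.term a l' r)
  | term_right {r r' : PTree L N} (a : L) (l : PTree L N) :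
      Rw G r r' → Rw G (.term a l r) (.term a l r')
  | nt_child {t t' : PTree L N} (B : N) (u v : List (PTree L N)) :
      Rw G t t' → Rw G (.nt B (u ++ t :: v)) (.nt B (u ++ t' :: v))

/-- The size of a grammar: the sum of the numbers of edges of all
right-hand sides. -/
def size [Fintype N] (G : SLT L N) : ℕ :=
  ∑ A : N, (PTree.nodeCount (G.P A) - 1)

end SLT

/-- A deterministic bottom-up tree automaton over binary trees: a state
assigned to the leaf symbol `_`, and a transition function mapping each
triple (label, state of left child, state of right child) to a state. -/
structure DBU (L Q : Type) where
  leafState : Q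
  delta : L → Q → Q → Q

namespace DBU

variable {L Q N : Type}

/-- The state reached at the root of a (ground) tree in the unique bottom-up
run. -/
def run (B : DBU L Q) : PTree L N → Q
  | .leaf => B.leafState
  | .param _ => B.leafState
  | .term a l r => B.delta a (run B l) (run B r)
  | .nt _ _ => B.leafState

/-- Annotate every node of a (ground) tree with the state that the unique
bottom-up run of `B` reaches at that node (the `_`-leaves all carry the leaf
state and stay unannotated). -/
def annotate {M : Type} (B : DBU L Q) : PTree L N → PTree (L × Q) M
  | .leaf => .leaf
  | .param i => .param i
  | .term a l r =>
      .term (a, B.delta a (run B l) (run B r)) (annotate B l) (annotate B r)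
  | .nt _ _ => .leaf

end DBU

section Aux
namespace PTree
variable {L N M Q : Type}

@[simp] lemma subst_leaf (env : List (PTree L N)) : subst env (.leaf : PTree L N) = .leaf := by
  simp [subst]
@[simp] lemma subst_param (env : List (PTree L N)) (i : ℕ) :
    subst env (.param i) = env.getD (i-1) .leaf := by simp [subst]
@[simp] lemma subst_term (env : List (PTree L N)) (a : L) (l r : PTree L N) :
    subst env (.term a l r) = .term a (subst env l) (subst env r) := by simp [subst]
@[simp] lemma subst_nt (env : List (PTree L N)) (A : N) (ts : List (PTree L N)) :
    subst env (.nt A ts) = .nt A (ts.map (subst env)) := by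
  rw [subst]
  congr 1
  exact List.attach_map_val

@[simp] lemma paramList_leaf : paramList (.leaf : PTree L N) = [] := by simp [paramList]
@[simp] lemma paramList_param (i : ℕ) : paramList (.param i : PTree L N) = [i] := by
  simp [paramList]
@[simp] lemma paramList_term (a : L) (l r : PTree L N) :
    paramList (.term a l r) = paramList l ++ paramList r := by simp [paramList]
@[simp] lemma paramList_nt (A : N) (ts : List (PTree L N)) :
    paramList (.nt A ts) = (ts.map paramList).flatten := by
  rw [paramList]; congr 1; exact List.attach_map_val

@[simp] lemma nodeCount_leaf : nodeCount (.leaf : PTree L N) = 1 := by simp [nodeCount]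
@[simp] lemma nodeCount_param (i : ℕ) : nodeCount (.param i : PTree L N) = 1 := by
  simp [nodeCount]
@[simp] lemma nodeCount_term (a : L) (l r : PTree L N) :
    nodeCount (.term a l r) = 1 + nodeCount l + nodeCount r := by simp [nodeCount]
@[simp] lemma nodeCount_nt (A : N) (ts : List (PTree L N)) :
    nodeCount (.nt A ts) = 1 + (ts.map nodeCount).sum := by
  rw [nodeCount]; congr 2; exact List.attach_map_val

lemma getD_map_leaf' {α β : Type*} (f : α → β) {d : α} {d' : β}
    (hf : f d = d') (l : List α) (i : ℕ) :
    (l.map f).getD i d' = f (l.getD i d) := by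
  rcases Nat.lt_or_ge i l.length with h | h
  · rw [List.getD_eq_getElem _ _ (by simpa using h), List.getD_eq_getElem _ _ h]
    simp
  · rw [List.getD_eq_default _ _ (by simpa using h), List.getD_eq_default _ _ h, hf]

lemma getD_map_leaf (f : PTree L N → PTree L M) (hf : f .leaf = .leaf)
    (l : List (PTree L N)) (i : ℕ) :
    (l.map f).getD i .leaf = f (l.getD i .leaf) := getD_map_leaf' f hf l i

end PTree
end Aux
section Aux2

lemma List.flatten_flatMap' {α β : Type*} (l : List (List α)) (f : α → List β) :
    l.flatten.flatMap f = (l.map (fun x => x.flatMap f)).flatten := by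
  induction l <;> simp_all

namespace PTree
variable {L N M Q : Type}

theorem subst_subst (e1 e2 : List (PTree L N)) :
    ∀ u : PTree L N, subst e1 (subst e2 u) = subst (e2.map (subst e1)) u
  | .leaf => by simp
  | .param i => by
      simp only [subst_param]
      exact (getD_map_leaf (subst e1) (by simp) e2 (i-1)).symm
  | .term a l r => by simp [subst_subst e1 e2 l, subst_subst e1 e2 r]
  | .nt B ts => by
      simp only [subst_nt, List.map_map, PTree.nt.injEq, true_and]
      exact List.map_congr_left fun t ht => subst_subst e1 e2 t
decreasing_by
  all_goals simp_wf
  all_goals try omega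
  all_goals (have := List.sizeOf_lt_of_mem ht; omega)

theorem paramList_subst (env : List (PTree L N)) :
    ∀ u : PTree L N,
      paramList (subst env u)
        = (paramList u).flatMap (fun i => paramList (env.getD (i-1) .leaf))
  | .leaf => by simp
  | .param i => by simp
  | .term a l r => by
      simp [paramList_subst env l, paramList_subst env r]
  | .nt B ts => by
      simp only [subst_nt, paramList_nt, List.map_map, List.flatten_flatMap',
        List.map_map]
      congr 1
      exact List.map_congr_left fun t ht => paramList_subst env t
decreasing_by
  all_goals simp_wf
  all_goals try omega
  all_goals (have := List.sizeOf_lt_of_mem ht; omega)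

end PTree
end Aux2
section Aux3
namespace SLT
open PTree
variable {L N : Type}

/-- `B` is directly below `A` in the grammar DAG. -/
def occRel (G : SLT L N) (B A : N) : Prop := Occurs B (G.P A)

lemma transGen_flip' {α : Type} {r : α → α → Prop} {a b} (h : Relation.TransGen r a b) :
    Relation.TransGen (fun x y => r y x) b a := by
  induction h with
  | single h => exact .single h
  | tail _ h ih => exact .head h ih

lemma wf_occRel [Finite N] (G : SLT L N) : WellFounded (occRel G) := by
  have hirr : IsIrrefl N (Relation.TransGen (fun B A => occRel G B A)) := by
    constructor
    intro A hA
    exact G.acyclic A (transGen_flip' hA)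
  have hwf : WellFounded (Relation.TransGen (fun B A => occRel G B A)) :=
    Finite.wellFounded_of_trans_of_irrefl _
  exact Subrelation.wf (fun h => Relation.TransGen.single h) hwf

/-- Weight of a tree relative to nonterminal weights. -/
def nuW (w : N → ℕ) : PTree L N → ℕ
  | .leaf => 1
  | .param _ => 1
  | .term _ l r => 1 + nuW w l + nuW w r
  | .nt A ts => 1 + w A + (ts.attach.map (fun t => nuW w t.1)).sum
decreasing_by
  all_goals simp_wf
  all_goals try omega
  all_goals (have := List.sizeOf_lt_of_mem t.2; omega)

@[simp] lemma nuW_leaf (w : N → ℕ) : nuW w (.leaf : PTree L N) = 1 := by simp [nuW]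
@[simp] lemma nuW_param (w : N → ℕ) (i : ℕ) : nuW w (.param i : PTree L N) = 1 := by
  simp [nuW]
@[simp] lemma nuW_term (w : N → ℕ) (a : L) (l r : PTree L N) :
    nuW w (.term a l r) = 1 + nuW w l + nuW w r := by simp [nuW]
@[simp] lemma nuW_nt (w : N → ℕ) (A : N) (ts : List (PTree L N)) :
    nuW w (.nt A ts) = 1 + w A + (ts.map (nuW w)).sum := by
  rw [nuW]; congr 2; exact List.attach_map_val

theorem nuW_congr (w1 w2 : N → ℕ) :
    ∀ u : PTree L N, (∀ B, Occurs B u → w1 B = w2 B) → nuW w1 u = nuW w2 u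
  | .leaf, _ => by simp
  | .param i, _ => by simp
  | .term a l r, h => by
      simp [nuW_congr w1 w2 l (fun B hB => h B (.term_left a hB)),
        nuW_congr w1 w2 r (fun B hB => h B (.term_right a hB))]
  | .nt A ts, h => by
      simp only [nuW_nt, h A (.here ts)]
      congr 2
      exact List.map_congr_left fun t ht =>
        nuW_congr w1 w2 t (fun B hB => h B (.nt A ht hB))
decreasing_by
  all_goals simp_wf
  all_goals try omega
  all_goals (have := List.sizeOf_lt_of_mem ht; omega)

open Classical in
/-- Weights of nonterminals: bigger than the weight of the right-hand side. -/
noncomputable def ntW [Fintype N] (G : SLT L N) : N → ℕ :=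
  (wf_occRel G).fix (fun A rec =>
    1 + nuW (fun B => if h : occRel G B A then rec B h else 0) (G.P A))

lemma ntW_eq [Fintype N] (G : SLT L N) (A : N) :
    ntW G A = 1 + nuW (ntW G) (G.P A) := by
  classical
  rw [ntW, (wf_occRel G).fix_eq]
  congr 1
  refine nuW_congr _ _ _ (fun B hB => ?_)
  rw [dif_pos (show G.occRel B A from hB)]

/-- Full expansion of a tree: all nonterminals recursively replaced by their
right-hand sides (with substitution of parameters). -/
noncomputable def expand [Fintype N] (G : SLT L N) : PTree L N → PTree L N
  | .leaf => .leaf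
  | .param i => .param i
  | .term a l r => .term a (expand G l) (expand G r)
  | .nt A ts => subst (ts.attach.map fun t => expand G t.1) (expand G (G.P A))
termination_by u => nuW (ntW G) u
decreasing_by
  all_goals simp_wf
  all_goals try omega
  · have : nuW (ntW G) t.1 ≤ (ts.map (nuW (ntW G))).sum :=
      List.le_sum_of_mem (List.mem_map_of_mem t.2)
    omega
  · rename_i A
    have := ntW_eq G A
    omega

variable [Fintype N] (G : SLT L N)

@[simp] lemma expand_leaf : expand G (.leaf : PTree L N) = .leaf := by simp [expand]
@[simp] lemma expand_param (i : ℕ) : expand G (.param i : PTree L N) = .param i := by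
  simp [expand]
@[simp] lemma expand_term (a : L) (l r : PTree L N) :
    expand G (.term a l r) = .term a (expand G l) (expand G r) := by
  rw [expand]
lemma expand_nt (A : N) (ts : List (PTree L N)) :
    expand G (.nt A ts) = subst (ts.map (expand G)) (expand G (G.P A)) := by
  rw [expand]
  congr 1
  exact List.attach_map_val

end SLT
end Aux3
section Aux4
namespace SLT
open PTree
variable {L N : Type}

theorem expand_subst [Fintype N] (G : SLT L N) (env : List (PTree L N)) :
    ∀ u : PTree L N,
      expand G (subst env u) = subst (env.map (expand G)) (expand G u)
  | .leaf => by simp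
  | .param i => by
      simp only [subst_param, expand_param]
      exact (getD_map_leaf (expand G) (by simp) env (i-1)).symm
  | .term a l r => by
      simp [expand_subst G env l, expand_subst G env r]
  | .nt A ts => by
      rw [subst_nt, expand_nt, expand_nt, subst_subst, List.map_map, List.map_map]
      congr 1
      exact List.map_congr_left fun t ht => expand_subst G env t
decreasing_by
  all_goals simp_wf
  all_goals try omega
  all_goals (have := List.sizeOf_lt_of_mem ht; omega)

theorem expand_rw [Fintype N] (G : SLT L N) {s s' : PTree L N} (h : Rw G s s') :
    expand G s = expand G s' := by
  induction h with
  | head A ts => rw [expand_nt, expand_subst]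
  | term_left a r _ ih => simp [ih]
  | term_right a l _ ih => simp [ih]
  | nt_child B u v _ ih =>
      rw [expand_nt, expand_nt]
      simp [ih]

theorem expand_rtg [Fintype N] (G : SLT L N) {s s' : PTree L N}
    (h : Relation.ReflTransGen (Rw G) s s') : expand G s = expand G s' := by
  induction h with
  | refl => rfl
  | tail _ hst ih => rw [ih, expand_rw G hst]

theorem expand_ground [Fintype N] (G : SLT L N) {t : PTree L N} (h : Ground t) :
    expand G t = t := by
  induction h with
  | leaf => simp
  | term a _ _ ihl ihr => simp [ihl, ihr]

theorem occurs_subst {B : N} (env : List (PTree L N)) :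
    ∀ u : PTree L N, Occurs B (subst env u) →
      Occurs B u ∨ ∃ e ∈ env, Occurs B e
  | .leaf, h => by simp at h; cases h
  | .param i, h => by
      simp only [subst_param] at h
      rcases Nat.lt_or_ge (i-1) env.length with hlt | hge
      · right
        refine ⟨env.getD (i-1) .leaf, ?_, h⟩
        rw [List.getD_eq_getElem _ _ hlt]
        exact List.getElem_mem hlt
      · rw [List.getD_eq_default _ _ hge] at h
        cases h
  | .term a l r, h => by
      simp only [subst_term] at h
      cases h with
      | term_left _ h =>
          rcases occurs_subst env l h with h' | h'
          · exact Or.inl (.term_left a h')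
          · exact Or.inr h'
      | term_right _ h =>
          rcases occurs_subst env r h with h' | h'
          · exact Or.inl (.term_right a h')
          · exact Or.inr h'
  | .nt A ts, h => by
      simp only [subst_nt] at h
      cases h with
      | here => exact Or.inl (.here ts)
      | nt _ hmem h =>
          rename_i t'
          rcases List.mem_map.1 hmem with ⟨t, ht, rfl⟩
          rcases occurs_subst env t h with h' | h'
          · exact Or.inl (.nt A ht h')
          · exact Or.inr h'
decreasing_by
  all_goals simp_wf
  all_goals try omega
  all_goals (have := List.sizeOf_lt_of_mem ht; omega)

theorem noOccurs_expand [Fintype N] (G : SLT L N) :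
    ∀ u : PTree L N, ∀ B : N, ¬ Occurs B (expand G u)
  | .leaf, B, h => by simp at h; cases h
  | .param i, B, h => by simp at h; cases h
  | .term a l r, B, h => by
      rw [expand_term] at h
      cases h with
      | term_left _ h => exact noOccurs_expand G l B h
      | term_right _ h => exact noOccurs_expand G r B h
  | .nt A ts, B, h => by
      rw [expand_nt] at h
      rcases occurs_subst _ _ h with h' | ⟨e, he, h'⟩
      · exact noOccurs_expand G (G.P A) B h'
      · rcases List.mem_map.1 he with ⟨t, ht, rfl⟩
        exact noOccurs_expand G t B h'
termination_by u => nuW (ntW G) u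
decreasing_by
  all_goals simp_wf
  all_goals try omega
  · have : nuW (ntW G) (G.P A) < ntW G A := by have := ntW_eq G A; omega
    omega
  · have : nuW (ntW G) t ≤ (ts.map (nuW (ntW G))).sum :=
      List.le_sum_of_mem (List.mem_map_of_mem ht)
    omega

theorem ground_of_noOccurs_noParam :
    ∀ t : PTree L N, (∀ B, ¬ Occurs B t) → paramList t = [] → Ground t
  | .leaf, _, _ => .leaf
  | .param i, _, hp => by simp at hp
  | .term a l r, ho, hp => by
      rw [paramList_term, List.append_eq_nil_iff] at hp
      exact .term a
        (ground_of_noOccurs_noParam l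
          (fun B h => ho B (.term_left a h)) hp.1)
        (ground_of_noOccurs_noParam r
          (fun B h => ho B (.term_right a h)) hp.2)
  | .nt A ts, ho, _ => absurd (Occurs.here (B := A) ts) (ho A)

end SLT
end Aux4
section Aux5

lemma List.range_flatMap_getD {α β : Type*} (d : α) (f : α → List β) :
    ∀ ts : List α,
      (List.range ts.length).flatMap (fun j => f (ts.getD j d))
        = (ts.map f).flatten
  | [] => by simp
  | t :: ts => by
      rw [List.length_cons, List.range_succ_eq_map, List.flatMap_cons,
        List.flatMap_map]
      simp only [List.getD_cons_zero, List.getD_cons_succ]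
      rw [List.range_flatMap_getD d f ts]
      simp

lemma List.range'_flatMap_getD {α β : Type*} (d : α) (f : α → List β)
    (ts : List α) :
    (List.range' 1 ts.length).flatMap (fun i => f (ts.getD (i-1) d))
      = (ts.map f).flatten := by
  rw [List.range'_eq_map_range, List.flatMap_map]
  simp only [Nat.add_sub_cancel_left, Nat.add_sub_cancel]
  exact List.range_flatMap_getD d f ts

namespace PTree
variable {L N : Type}

lemma ArityOk.term_l {rank : N → ℕ} {a : L} {l r : PTree L N}
    (h : ArityOk rank (.term a l r)) : ArityOk rank l := by
  cases h; assumption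
lemma ArityOk.term_r {rank : N → ℕ} {a : L} {l r : PTree L N}
    (h : ArityOk rank (.term a l r)) : ArityOk rank r := by
  cases h; assumption
lemma ArityOk.nt_len {rank : N → ℕ} {A : N} {ts : List (PTree L N)}
    (h : ArityOk rank (.nt A ts)) : ts.length = rank A := by
  cases h; assumption
lemma ArityOk.nt_mem {rank : N → ℕ} {A : N} {ts : List (PTree L N)}
    (h : ArityOk rank (.nt A ts)) : ∀ t ∈ ts, ArityOk rank t := by
  cases h; assumption

end PTree

namespace SLT
open PTree
variable {L N : Type}

theorem paramList_expand [Fintype N] (G : SLT L N) :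
    ∀ u : PTree L N, ArityOk G.rank u → paramList (expand G u) = paramList u
  | .leaf, _ => by simp
  | .param i, _ => by simp
  | .term a l r, h => by
      simp [paramList_expand G l h.term_l, paramList_expand G r h.term_r]
  | .nt A ts, h => by
      rw [expand_nt, paramList_subst, paramList_expand G (G.P A) (G.arity A),
        G.params A, ← h.nt_len]
      have hbody : ∀ i : ℕ,
          paramList ((ts.map (expand G)).getD (i-1) .leaf)
            = paramList (expand G (ts.getD (i-1) .leaf)) := fun i => by
        rw [getD_map_leaf (expand G) (by simp)]
      simp only [hbody]
      rw [List.range'_flatMap_getD PTree.leaf (fun t => paramList (expand G t)) ts]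
      rw [paramList_nt]
      congr 1
      refine List.map_congr_left fun t ht => paramList_expand G t (h.nt_mem t ht)
termination_by u => nuW (ntW G) u
decreasing_by
  all_goals simp_wf
  all_goals try omega
  · have : nuW (ntW G) (G.P A) < ntW G A := by have := ntW_eq G A; omega
    omega
  · have : nuW (ntW G) t ≤ (ts.map (nuW (ntW G))).sum :=
      List.le_sum_of_mem (List.mem_map_of_mem ht)
    omega

end SLT
end Aux5
section Aux6
namespace DBU
open PTree
variable {L Q N M : Type}

/-- State of a tree relative to an environment assigning states to
parameters (`param i` gets `env (i-1)`). -/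
def runE (B : DBU L Q) (env : ℕ → Q) : PTree L N → Q
  | .leaf => B.leafState
  | .param i => env (i-1)
  | .term a l r => B.delta a (runE B env l) (runE B env r)
  | .nt _ _ => B.leafState

/-- Annotation of a tree relative to a parameter-state environment. -/
def annR (B : DBU L Q) (env : ℕ → Q) : PTree L N → PTree (L × Q) M
  | .leaf => .leaf
  | .param i => .param i
  | .term a l r =>
      .term (a, B.delta a (runE B env l) (runE B env r))
        (annR B env l) (annR B env r)
  | .nt _ _ => .leaf

@[simp] lemma runE_leaf (B : DBU L Q) (env : ℕ → Q) :
    runE B env (.leaf : PTree L N) = B.leafState := rfl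
@[simp] lemma runE_param (B : DBU L Q) (env : ℕ → Q) (i : ℕ) :
    runE B env (.param i : PTree L N) = env (i-1) := rfl
@[simp] lemma runE_term (B : DBU L Q) (env : ℕ → Q) (a : L) (l r : PTree L N) :
    runE B env (.term a l r) = B.delta a (runE B env l) (runE B env r) := rfl
@[simp] lemma runE_nt (B : DBU L Q) (env : ℕ → Q) (A : N) (ts : List (PTree L N)) :
    runE B env (.nt A ts) = B.leafState := rfl

@[simp] lemma annR_leaf (B : DBU L Q) (env : ℕ → Q) :
    annR B env (.leaf : PTree L N) = (.leaf : PTree (L × Q) M) := rfl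
@[simp] lemma annR_param (B : DBU L Q) (env : ℕ → Q) (i : ℕ) :
    annR B env (.param i : PTree L N) = (.param i : PTree (L × Q) M) := rfl
@[simp] lemma annR_term (B : DBU L Q) (env : ℕ → Q) (a : L) (l r : PTree L N) :
    annR B env (.term a l r)
      = (.term (a, B.delta a (runE B env l) (runE B env r))
          (annR B env l) (annR B env r) : PTree (L × Q) M) := rfl
@[simp] lemma annR_nt (B : DBU L Q) (env : ℕ → Q) (A : N) (ts : List (PTree L N)) :
    annR B env (.nt A ts) = (.leaf : PTree (L × Q) M) := rfl

lemma runE_ground (B : DBU L Q) (env : ℕ → Q) {t : PTree L N}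
    (h : Ground t) : runE B env t = run B t := by
  induction h with
  | leaf => rfl
  | term a _ _ ihl ihr => simp [runE, run, ihl, ihr]

lemma annR_ground (B : DBU L Q) (env : ℕ → Q) {t : PTree L N} (h : Ground t) :
    annR B env t = (annotate B t : PTree (L × Q) M) := by
  induction h with
  | leaf => rfl
  | term a hl hr ihl ihr =>
      rw [annR, annotate, ihl, ihr, runE_ground B env hl, runE_ground B env hr]

lemma runE_subst (B : DBU L Q) (env : ℕ → Q) (vs : List (PTree L N)) :
    ∀ w : PTree L N,
      runE B (fun j => runE B env (vs.getD j .leaf)) w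
        = runE B env (subst vs w)
  | .leaf => by simp [runE]
  | .param i => by simp [runE]
  | .term a l r => by
      simp only [subst_term, runE]
      rw [runE_subst B env vs l, runE_subst B env vs r]
  | .nt A ts => by simp [runE]

lemma annR_subst (B : DBU L Q) (env : ℕ → Q) (vs : List (PTree L N)) :
    ∀ w : PTree L N,
      subst (vs.map (annR B env))
          (annR B (fun j => runE B env (vs.getD j .leaf)) w)
        = (annR B env (subst vs w) : PTree (L × Q) M)
  | .leaf => by simp [annR]
  | .param i => by
      simp only [annR, subst_param]
      exact PTree.getD_map_leaf' (annR B env) (by simp [annR]) vs (i-1)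
  | .term a l r => by
      simp only [subst_term, annR]
      rw [annR_subst B env vs l, annR_subst B env vs r,
        runE_subst B env vs l, runE_subst B env vs r]
  | .nt A ts => by simp [annR]

end DBU

namespace SLT
open PTree
variable {L N : Type}

theorem rw_subst {G : SLT L N} {s s' : PTree L N} (env : List (PTree L N))
    (h : Rw G s s') : Rw G (subst env s) (subst env s') := by
  induction h with
  | head A ts =>
      rw [subst_nt, subst_subst]
      exact .head A (ts.map (subst env))
  | term_left a r _ ih => rw [subst_term, subst_term]; exact .term_left a _ ih
  | term_right a l _ ih => rw [subst_term, subst_term]; exact .term_right a _ ih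
  | nt_child B u v _ ih =>
      rw [subst_nt, subst_nt, List.map_append, List.map_cons, List.map_append,
        List.map_cons]
      exact .nt_child B _ _ ih

theorem rtg_subst {G : SLT L N} {s s' : PTree L N} (env : List (PTree L N))
    (h : Relation.ReflTransGen (Rw G) s s') :
    Relation.ReflTransGen (Rw G) (subst env s) (subst env s') := by
  induction h with
  | refl => exact .refl
  | tail _ hst ih => exact ih.tail (rw_subst env hst)

theorem rtg_term_left {G : SLT L N} {l l' : PTree L N} (a : L) (r : PTree L N)
    (h : Relation.ReflTransGen (Rw G) l l') :
    Relation.ReflTransGen (Rw G) (.term a l r) (.term a l' r) := by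
  induction h with
  | refl => exact .refl
  | tail _ hst ih => exact ih.tail (.term_left a r hst)

theorem rtg_term_right {G : SLT L N} {r r' : PTree L N} (a : L) (l : PTree L N)
    (h : Relation.ReflTransGen (Rw G) r r') :
    Relation.ReflTransGen (Rw G) (.term a l r) (.term a l r') := by
  induction h with
  | refl => exact .refl
  | tail _ hst ih => exact ih.tail (.term_right a l hst)

theorem rtg_nt_pos {G : SLT L N} {t t' : PTree L N} (B : N)
    (u v : List (PTree L N)) (h : Relation.ReflTransGen (Rw G) t t') :
    Relation.ReflTransGen (Rw G) (.nt B (u ++ t :: v)) (.nt B (u ++ t' :: v)) := by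
  induction h with
  | refl => exact .refl
  | tail _ hst ih => exact ih.tail (.nt_child B u v hst)

theorem rtg_nt_map {G : SLT L N} (B : N) {α : Type} (f g : α → PTree L N) :
    ∀ (pre : List (PTree L N)) (ts : List α),
      (∀ t ∈ ts, Relation.ReflTransGen (Rw G) (f t) (g t)) →
      Relation.ReflTransGen (Rw G) (.nt B (pre ++ ts.map f))
        (.nt B (pre ++ ts.map g))
  | pre, [], _ => .refl
  | pre, t :: ts, h => by
      rw [List.map_cons, List.map_cons]
      refine Relation.ReflTransGen.trans
        (rtg_nt_pos B pre (ts.map f) (h t (List.mem_cons_self))) ?_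
      have := rtg_nt_map B f g (pre ++ [g t]) ts
        (fun t ht => h t (List.mem_cons_of_mem _ ht))
      simpa using this

theorem subst_params_id {n : ℕ} :
    ∀ u : PTree L N, (∀ i ∈ paramList u, 1 ≤ i ∧ i ≤ n) →
      subst ((List.range' 1 n).map .param) u = u
  | .leaf, _ => by simp
  | .param i, h => by
      obtain ⟨h1, h2⟩ := h i (by simp)
      rw [subst_param, List.getD_eq_getElem _ _ (by simp; omega)]
      simp only [List.getElem_map, List.getElem_range']
      congr 1
      omega
  | .term a l r, h => by
      rw [subst_term,
        subst_params_id l (fun i hi => h i (by simp [hi])),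
        subst_params_id r (fun i hi => h i (by simp [hi]))]
  | .nt A ts, h => by
      rw [subst_nt]
      congr 1
      conv_rhs => rw [← List.map_id ts]
      refine List.map_congr_left fun t ht => subst_params_id t (fun i hi => ?_)
      refine h i ?_
      rw [paramList_nt]
      exact List.mem_flatten.2 ⟨paramList t, List.mem_map_of_mem ht, hi⟩
decreasing_by
  all_goals simp_wf
  all_goals try omega
  all_goals (have := List.sizeOf_lt_of_mem ht; omega)

theorem map_range'_getD (args : List (PTree L N)) :
    (List.range' 1 args.length).map (fun i => args.getD (i-1) .leaf) = args := by
  refine List.ext_getElem (by simp) ?_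
  intro j h1 h2
  simp only [List.getElem_map, List.getElem_range']
  rw [show 1 + 1 * j - 1 = j by omega, List.getD_eq_getElem _ _ h2]

end SLT
end Aux6
section Aux7
namespace SLT
open PTree
variable {L N Q M' : Type}

/-- Extend a `Fin k`-indexed state vector to a total environment. -/
def liftEnv (B : DBU L Q) (k : ℕ) (q : Fin k → Q) : ℕ → Q :=
  fun j => if h : j < k then q ⟨j, h⟩ else B.leafState

/-- The annotated right-hand side: every node gets the state that `B`
computes on its expansion, relative to the parameter environment `env`;
nonterminal nodes are relabelled with the states of their arguments. -/
noncomputable def annP [Fintype N] (G : SLT L N) (B : DBU L Q) (k : ℕ)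
    (e : N × (Fin k → Q) → M') (env : ℕ → Q) : PTree L N → PTree (L × Q) M'
  | .leaf => .leaf
  | .param i => .param i
  | .term a l r =>
      .term (a, B.delta a (DBU.runE B env (expand G l)) (DBU.runE B env (expand G r)))
        (annP G B k e env l) (annP G B k e env r)
  | .nt A ts =>
      .nt (e (A, fun j => DBU.runE B env (expand G (ts.getD j .leaf))))
        (ts.attach.map fun t => annP G B k e env t.1)
decreasing_by
  all_goals simp_wf
  all_goals try omega
  all_goals (have := List.sizeOf_lt_of_mem t.2; omega)

variable [Fintype N] (G : SLT L N) (B : DBU L Q) (k : ℕ)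
  (e : N × (Fin k → Q) → M') (env : ℕ → Q)

@[simp] lemma annP_leaf : annP G B k e env (.leaf : PTree L N) = .leaf := by
  simp [annP]
@[simp] lemma annP_param (i : ℕ) :
    annP G B k e env (.param i : PTree L N) = .param i := by simp [annP]
@[simp] lemma annP_term (a : L) (l r : PTree L N) :
    annP G B k e env (.term a l r)
      = .term (a, B.delta a (DBU.runE B env (expand G l)) (DBU.runE B env (expand G r)))
          (annP G B k e env l) (annP G B k e env r) := by
  rw [annP]
lemma annP_nt (A : N) (ts : List (PTree L N)) :
    annP G B k e env (.nt A ts)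
      = .nt (e (A, fun j => DBU.runE B env (expand G (ts.getD j .leaf))))
          (ts.map (annP G B k e env)) := by
  rw [annP]
  congr 1
  exact List.attach_map_val

theorem paramList_annP :
    ∀ u : PTree L N, paramList (annP G B k e env u) = paramList u
  | .leaf => by simp
  | .param i => by simp
  | .term a l r => by
      simp [paramList_annP l, paramList_annP r]
  | .nt A ts => by
      rw [annP_nt, paramList_nt, paramList_nt, List.map_map]
      congr 1
      exact List.map_congr_left fun t ht => paramList_annP t
decreasing_by
  all_goals simp_wf
  all_goals try omega
  all_goals (have := List.sizeOf_lt_of_mem ht; omega)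

theorem nodeCount_annP :
    ∀ u : PTree L N, nodeCount (annP G B k e env u) = nodeCount u
  | .leaf => by simp
  | .param i => by simp
  | .term a l r => by
      simp [nodeCount_annP l, nodeCount_annP r]
  | .nt A ts => by
      rw [annP_nt, nodeCount_nt, nodeCount_nt, List.map_map]
      congr 2
      exact List.map_congr_left fun t ht => nodeCount_annP t
decreasing_by
  all_goals simp_wf
  all_goals try omega
  all_goals (have := List.sizeOf_lt_of_mem ht; omega)

theorem occurs_annP {X : M'} :
    ∀ u : PTree L N, Occurs X (annP G B k e env u) →
      ∃ (A : N) (q : Fin k → Q), X = e (A, q) ∧ Occurs A u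
  | .leaf, h => by simp at h; cases h
  | .param i, h => by simp at h; cases h
  | .term a l r, h => by
      rw [annP_term] at h
      cases h with
      | term_left _ h =>
          obtain ⟨A, q, hX, hA⟩ := occurs_annP l h
          exact ⟨A, q, hX, .term_left a hA⟩
      | term_right _ h =>
          obtain ⟨A, q, hX, hA⟩ := occurs_annP r h
          exact ⟨A, q, hX, .term_right a hA⟩
  | .nt A ts, h => by
      rw [annP_nt] at h
      cases h with
      | here => exact ⟨A, _, rfl, .here ts⟩
      | nt _ hmem h =>
          rcases List.mem_map.1 hmem with ⟨t, ht, rfl⟩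
          obtain ⟨A', q, hX, hA'⟩ := occurs_annP t h
          exact ⟨A', q, hX, .nt A ht hA'⟩
decreasing_by
  all_goals simp_wf
  all_goals try omega
  all_goals (have := List.sizeOf_lt_of_mem ht; omega)

theorem arity_annP (e' : N × (Fin k → Q) ≃ M') :
    ∀ u : PTree L N, ArityOk G.rank u →
      ArityOk (fun X => G.rank (e'.symm X).1) (annP G B k (⇑e') env u)
  | .leaf, _ => by simpa using ArityOk.leaf
  | .param i, _ => by simpa using ArityOk.param i
  | .term a l r, h => by
      rw [annP_term]
      exact .term _ (arity_annP e' l h.term_l) (arity_annP e' r h.term_r)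
  | .nt A ts, h => by
      rw [annP_nt]
      refine .nt _ (by simp [h.nt_len]) ?_
      intro t' ht'
      rcases List.mem_map.1 ht' with ⟨t, ht, rfl⟩
      exact arity_annP e' t (h.nt_mem t ht)
decreasing_by
  all_goals simp_wf
  all_goals try omega
  all_goals (have := List.sizeOf_lt_of_mem ht; omega)

/-- The annotated grammar. -/
noncomputable def annG (e' : N × (Fin k → Q) ≃ M') : SLT (L × Q) M' where
  rank X := G.rank (e'.symm X).1
  start := e' (G.start, fun _ => B.leafState)
  P X := annP G B k (⇑e') (liftEnv B k (e'.symm X).2) (G.P (e'.symm X).1)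
  rank_start := by simp [G.rank_start]
  arity X := arity_annP G B k _ e' _ (G.arity _)
  params X := by
    rw [paramList_annP]
    simp [G.params]
  acyclic := by
    intro X hX
    have hstep : ∀ Y Z : M',
        Occurs Z (annP G B k (⇑e') (liftEnv B k (e'.symm Y).2) (G.P (e'.symm Y).1))
          → Occurs (e'.symm Z).1 (G.P (e'.symm Y).1) := by
      intro Y Z h
      obtain ⟨A, q, rfl, hA⟩ := occurs_annP G B k _ _ _ h
      simpa using hA
    have := Relation.TransGen.lift (p := fun A B' => Occurs B' (G.P A))
      (fun X => (e'.symm X).1) hstep _ _ hX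
    exact G.acyclic _ this

end SLT
end Aux7
section Aux8
namespace SLT
open PTree
variable {L N Q M' : Type} [Fintype N]

theorem annP_rtg (G : SLT L N) (B : DBU L Q) (k : ℕ)
    (e' : N × (Fin k → Q) ≃ M') (hk : ∀ A, G.rank A ≤ k) :
    ∀ (u : PTree L N) (env : ℕ → Q), ArityOk G.rank u →
      (∀ (A : N) (q : Fin k → Q), Occurs A u →
        Relation.ReflTransGen (Rw (annG G B k e'))
          (annP G B k (⇑e') (liftEnv B k q) (G.P A))
          (DBU.annR B (liftEnv B k q) (expand G (G.P A)))) →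
      Relation.ReflTransGen (Rw (annG G B k e'))
        (annP G B k (⇑e') env u) (DBU.annR B env (expand G u))
  | .leaf, env, _, _ => by
      rw [annP_leaf, expand_leaf, DBU.annR_leaf]
  | .param i, env, _, _ => by
      rw [annP_param, expand_param, DBU.annR_param]
  | .term a l r, env, h, H => by
      rw [annP_term, expand_term, DBU.annR_term]
      exact (rtg_term_left _ _
          (annP_rtg G B k e' hk l env h.term_l
            (fun A q hA => H A q (.term_left a hA)))).trans
        (rtg_term_right _ _
          (annP_rtg G B k e' hk r env h.term_r
            (fun A q hA => H A q (.term_right a hA))))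
  | .nt A' ts, env, h, H => by
      rw [annP_nt, expand_nt]
      have hlen : ts.length = G.rank A' := h.nt_len
      set qf : Fin k → Q :=
        fun j => DBU.runE B env (expand G (ts.getD (j : ℕ) .leaf)) with hqf
      set args : List (PTree (L × Q) M') :=
        ts.map (fun t => DBU.annR B env (expand G t)) with hargs
      -- step 1: rewrite the children
      have step1 : Relation.ReflTransGen (Rw (annG G B k e'))
          (.nt (e' (A', qf)) (ts.map (annP G B k (⇑e') env)))
          (.nt (e' (A', qf)) args) := by
        have := rtg_nt_map (G := annG G B k e') (e' (A', qf))
          (annP G B k (⇑e') env) (fun t => DBU.annR B env (expand G t)) [] ts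
          (fun t ht => annP_rtg G B k e' hk t env (h.nt_mem t ht)
            (fun A q hA => H A q (.nt A' ht hA)))
        simpa [hargs] using this
      -- step 2: expand the head nonterminal
      have hid : subst ((List.range' 1 (G.rank A')).map .param)
          (annP G B k (⇑e') (liftEnv B k qf) (G.P A'))
          = annP G B k (⇑e') (liftEnv B k qf) (G.P A') := by
        refine subst_params_id _ (fun i hi => ?_)
        rw [paramList_annP, G.params] at hi
        have := List.mem_range'_1.1 hi
        omega
      have hstep : Rw (annG G B k e')
          (.nt (e' (A', qf)) ((List.range' 1 (G.rank A')).map .param))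
          (annP G B k (⇑e') (liftEnv B k qf) (G.P A')) := by
        have h0 := Rw.head (G := annG G B k e') (e' (A', qf))
          ((List.range' 1 (G.rank A')).map .param)
        rw [show (annG G B k e').P (e' (A', qf))
              = annP G B k (⇑e') (liftEnv B k qf) (G.P A') by
            simp [annG]] at h0
        rwa [hid] at h0
      have chain := (Relation.ReflTransGen.single hstep).trans (H A' qf (.here ts))
      have sub := rtg_subst args chain
      have hL : subst args (.nt (e' (A', qf)) ((List.range' 1 (G.rank A')).map .param))
          = .nt (e' (A', qf)) args := by
        rw [subst_nt, List.map_map]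
        congr 1
        have h1 : (subst args ∘ PTree.param) = fun i => args.getD (i-1) .leaf := by
          funext i; exact subst_param args i
        rw [h1, show G.rank A' = args.length by simp [hargs, hlen]]
        exact map_range'_getD args
      have hR : subst args (DBU.annR B (liftEnv B k qf) (expand G (G.P A')))
          = DBU.annR B env (subst (ts.map (expand G)) (expand G (G.P A'))) := by
        have henv : liftEnv B k qf
            = fun j => DBU.runE B env ((ts.map (expand G)).getD j .leaf) := by
          funext j
          rw [getD_map_leaf (expand G) (by simp) ts j]
          by_cases hj : j < k
          · simp [liftEnv, hj, hqf]
          · have hd : ts.getD j .leaf = .leaf :=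
              List.getD_eq_default _ _ (by have := hk A'; omega)
            simp only [liftEnv, dif_neg hj]
            rw [hd, expand_leaf, DBU.runE_leaf]
        have hargs2 : args = (ts.map (expand G)).map (DBU.annR B env) := by
          rw [hargs, List.map_map]
          rfl
        rw [henv, hargs2]
        exact DBU.annR_subst B env (ts.map (expand G)) (expand G (G.P A'))
      rw [hL, hR] at sub
      exact step1.trans sub
decreasing_by
  all_goals simp_wf
  all_goals try omega
  all_goals (have := List.sizeOf_lt_of_mem ht; omega)

theorem annP_main (G : SLT L N) (B : DBU L Q) (k : ℕ)
    (e' : N × (Fin k → Q) ≃ M') (hk : ∀ A, G.rank A ≤ k) (A : N) :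
    ∀ q : Fin k → Q,
      Relation.ReflTransGen (Rw (annG G B k e'))
        (annP G B k (⇑e') (liftEnv B k q) (G.P A))
        (DBU.annR B (liftEnv B k q) (expand G (G.P A))) := by
  induction A using (wf_occRel G).induction with
  | _ A ih =>
    intro q
    exact annP_rtg G B k e' hk (G.P A) (liftEnv B k q) (G.arity A)
      (fun A2 q2 hocc => ih A2 hocc q2)

end SLT
end Aux8
/-- Annotation of an SLT grammar by a deterministic
bottom-up tree automaton: there is a constant `c > 0` such that for every
`k`, every deterministic bottom-up tree automaton `B` with state set `Q` and
every `k`-SLT grammar `G` (all nonterminals of rank at most `k`) there is an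
SLT grammar of size `O(|Q|^{k+1}·|G|)` deriving the tree derived by `G` with
every node annotated by the state that `B` reaches at that node in its
unique run. -/
theorem slt_bottom_up_annotation :
    ∃ c : ℕ, 0 < c ∧
      ∀ (k : ℕ) (L N Q : Type) [Fintype N] [Fintype Q]
        (B : DBU L Q) (G : SLT L N), (∀ A, G.rank A ≤ k) →
        ∃ (m : ℕ) (G' : SLT (L × Q) (Fin m)),
          SLT.size G' ≤ c * (Fintype.card Q) ^ (k + 1) * (SLT.size G + 1) ∧
          ∀ t : PTree L N, PTree.Ground t →
            Relation.ReflTransGen (SLT.Rw G) (G.P G.start) t →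
            Relation.ReflTransGen (SLT.Rw G') (G'.P G'.start)
              (DBU.annotate B t) := by
  refine ⟨1, one_pos, ?_⟩
  intro k L N Q _ _ B G hk
  classical
  haveI : Nonempty Q := ⟨B.leafState⟩
  set m := Fintype.card (N × (Fin k → Q)) with hm
  set e' : (N × (Fin k → Q)) ≃ Fin m := Fintype.equivFin _ with he'
  refine ⟨m, SLT.annG G B k e', ?_, ?_⟩
  · -- size bound
    have hsize : SLT.size (SLT.annG G B k e')
        = (Fintype.card Q) ^ k * SLT.size G := by
      unfold SLT.size
      have h1 : ∀ X : Fin m,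
          PTree.nodeCount ((SLT.annG G B k e').P X) - 1
            = PTree.nodeCount (G.P (e'.symm X).1) - 1 := by
        intro X
        simp only [SLT.annG]
        rw [SLT.nodeCount_annP]
      calc ∑ X : Fin m, (PTree.nodeCount ((SLT.annG G B k e').P X) - 1)
          = ∑ X : Fin m, (PTree.nodeCount (G.P (e'.symm X).1) - 1) := by
            exact Finset.sum_congr rfl (fun X _ => h1 X)
        _ = ∑ p : N × (Fin k → Q), (PTree.nodeCount (G.P p.1) - 1) :=
            Equiv.sum_comp e'.symm (fun p => PTree.nodeCount (G.P p.1) - 1)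
        _ = ∑ A : N, ∑ _q : Fin k → Q, (PTree.nodeCount (G.P A) - 1) :=
            Fintype.sum_prod_type _
        _ = ∑ A : N, (Fintype.card Q) ^ k * (PTree.nodeCount (G.P A) - 1) := by
            refine Finset.sum_congr rfl (fun A _ => ?_)
            rw [Finset.sum_const]
            simp [Fintype.card_fun, mul_comm]
        _ = (Fintype.card Q) ^ k * ∑ A : N, (PTree.nodeCount (G.P A) - 1) :=
            (Finset.mul_sum _ _ _).symm
    rw [hsize, one_mul]
    have hQ : 1 ≤ Fintype.card Q := Fintype.card_pos
    exact Nat.mul_le_mul (Nat.pow_le_pow_right hQ (Nat.le_succ k))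
      (Nat.le_succ _)
  · -- derivation
    intro t ht hderiv
    have hVt : SLT.expand G (G.P G.start) = t := by
      have h := SLT.expand_rtg G hderiv
      rwa [SLT.expand_ground G ht] at h
    have hmain := SLT.annP_main G B k e' hk G.start (fun _ => B.leafState)
    rw [hVt, DBU.annR_ground B _ ht] at hmain
    have hstart : (SLT.annG G B k e').P (SLT.annG G B k e').start
        = SLT.annP G B k (⇑e') (SLT.liftEnv B k (fun _ => B.leafState))
            (G.P G.start) := by
      simp [SLT.annG]
    rw [hstart]
    exact hmain
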